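/- Theorem (Frankston–Kahn–Narayanan–Park, spread-measure form): There exists an absolute constant K > 0 such that the following holds for every N ∈ ℕ, every nontrivial monotone property F ⊆ {0,1}^N with L(F) ≥ 2, and every p ∈ (0,1): if there exists a p-spread probability measure ν supported on F, then μ_q(F) ≥ 1/2 where q = min(1, K·p·log L(F)); in particular the critical probability satisfies p_c(F) ≤ K·p·log L(F). -/

import Mathlib

open Finset

/-- The number of coordinates of `x ∈ {0,1}^N` equal to `1`. -/
def wt {N : ℕ} (x : Fin N → Bool) : ℕ := (Finset.univ.filter (fun i => x i = true)).card

open Classical in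
/-- The probability of the property `F ⊆ {0,1}^N` under the product measure `μ_p`
in which each coordinate is `1` independently with probability `p`. -/
noncomputable def mu (N : ℕ) (p : ℝ) (F : Set (Fin N → Bool)) : ℝ :=
  ∑ x : Fin N → Bool,
    if x ∈ F then p ^ wt x * (1 - p) ^ (N - wt x) else 0

/-- A property `F ⊆ {0,1}^N` is monotone if it is closed upwards in the
coordinatewise order. -/
def MonotoneProp {N : ℕ} (F : Set (Fin N → Bool)) : Prop :=
  ∀ x y : Fin N → Bool, x ∈ F → x ≤ y → y ∈ F

open Classical in
/-- `L(F)`: the maximum number of `1`-coordinates of a minimal element of `F`. -/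
noncomputable def Lmax (N : ℕ) (F : Set (Fin N → Bool)) : ℕ :=
  (Finset.univ.filter
    (fun x : Fin N → Bool => x ∈ F ∧ ∀ y : Fin N → Bool, y ∈ F → y ≤ x → y = x)).sup wt

open Classical in
/-- A probability measure `ν` (given by its mass function) supported on `F` is `p`-spread if
`ν({T : S ≤ T}) ≤ 2 p^{|S|}` for every `S ∈ {0,1}^N`. -/
def IsSpread (N : ℕ) (p : ℝ) (ν : (Fin N → Bool) → ℝ) : Prop :=
  ∀ S : Fin N → Bool, ∑ T ∈ Finset.univ.filter (fun T => S ≤ T), ν T ≤ 2 * p ^ wt S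


noncomputable def wgt (N : ℕ) (q : ℝ) (x : Fin N → Bool) : ℝ :=
  q ^ wt x * (1 - q) ^ (N - wt x)

open Classical in
noncomputable def ind {N : ℕ} (F : Set (Fin N → Bool)) (x : Fin N → Bool) : ℝ :=
  if x ∈ F then 1 else 0

section FKNSAux
variable {N : ℕ}

lemma booleq {x y : Bool} (h : x ≤ y) (h2 : y = true → x = true) : x = y := by
  revert h h2; cases x <;> cases y <;> decide

lemma le_iff_mem {x y : Fin N → Bool} : x ≤ y ↔ ∀ i, x i = true → y i = true := by
  constructor
  · intro h i hi
    have := h i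
    rw [hi] at this
    exact booleq this (fun _ => rfl) ▸ rfl
  · intro h i
    by_cases hx : x i = true
    · rw [hx, h i hx]
    · simp only [Bool.not_eq_true] at hx; rw [hx]; exact Bool.false_le _

lemma wt_le_wt_of_le {x y : Fin N → Bool} (h : x ≤ y) : wt x ≤ wt y := by
  apply Finset.card_le_card
  intro i hi
  simp only [mem_filter, mem_univ, true_and] at *
  exact le_iff_mem.1 h i hi

lemma wt_bot : wt (⊥ : Fin N → Bool) = 0 := by
  simp [wt]

lemma wt_le (x : Fin N → Bool) : wt x ≤ N := by
  have := Finset.card_filter_le (Finset.univ : Finset (Fin N)) (fun i => x i = true)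
  simpa [wt] using this

lemma eq_of_le_of_wt_le {x y : Fin N → Bool} (h : x ≤ y) (h2 : wt y ≤ wt x) : x = y := by
  have hs : (univ.filter (fun i => x i = true)) ⊆ (univ.filter (fun i => y i = true)) := by
    intro i hi; simp only [mem_filter, mem_univ, true_and] at *; exact le_iff_mem.1 h i hi
  have heq := Finset.eq_of_subset_of_card_le hs h2
  funext i
  apply booleq (h i)
  intro hy
  have : i ∈ univ.filter (fun i => x i = true) := by
    rw [heq]; simp [hy]
  simpa using this

lemma wt_eq_zero {x : Fin N → Bool} (h : wt x = 0) : x = ⊥ := by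
  have : (⊥ : Fin N → Bool) ≤ x := bot_le
  exact (eq_of_le_of_wt_le this (by rw [h]; simp [wt_bot])).symm

lemma inf_compl_le_compl (x W : Fin N → Bool) : x ⊓ Wᶜ ≤ Wᶜ := inf_le_right

lemma wt_sup_disjoint {x y : Fin N → Bool} (h : x ⊓ y = ⊥) :
    wt (x ⊔ y) = wt x + wt y := by
  classical
  rw [wt, wt, wt]
  rw [← Finset.card_union_of_disjoint]
  · congr 1
    ext i
    simp only [mem_filter, mem_union, mem_univ, true_and, Pi.sup_apply]
    cases hx : x i <;> cases hy : y i <;> simp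
  · rw [Finset.disjoint_left]
    intro i hi hj
    simp only [mem_filter, mem_univ, true_and] at hi hj
    have : (x ⊓ y) i = true := by simp [Pi.inf_apply, hi, hj]
    rw [h] at this
    simpa using this

lemma sup_inf_compl (S W : Fin N → Bool) : (S ⊓ W) ⊔ (S ⊓ Wᶜ) = S := by
  rw [← inf_sup_left, sup_compl_eq_top, inf_top_eq]

lemma le_sup_of_frag {S W T : Fin N → Bool} (h : S ⊓ Wᶜ = T) : S ≤ W ⊔ T := by
  conv_lhs => rw [← sup_inf_compl S W, h]
  exact sup_le_sup_right inf_le_right T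

lemma sup_apply_or (x y : Fin N → Bool) (i : Fin N) : (x ⊔ y) i = (x i || y i) := by
  simp [Pi.sup_apply]

lemma wgt_prod (q : ℝ) (x : Fin N → Bool) :
    wgt N q x = ∏ i, (if x i = true then q else 1-q) := by
  classical
  rw [← Finset.prod_filter_mul_prod_filter_not univ (fun i => x i = true)]
  have h1 : ∏ i ∈ univ.filter (fun i => x i = true), (if x i = true then q else 1-q)
      = q ^ wt x := by
    rw [Finset.prod_congr rfl (fun i hi => ?_), Finset.prod_const]
    · rfl
    · simp only [mem_filter, mem_univ, true_and] at hi; simp [hi]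
  have h2 : ∏ i ∈ univ.filter (fun i => ¬ x i = true), (if x i = true then q else 1-q)
      = (1-q) ^ (N - wt x) := by
    rw [Finset.prod_congr rfl (fun i hi => ?_), Finset.prod_const]
    · congr 1
      have := Finset.card_filter_add_card_filter_not
        (s := (univ : Finset (Fin N))) (p := fun i => x i = true)
      simp only [Finset.card_univ, Fintype.card_fin] at this
      rw [wt]
      omega
    · simp only [mem_filter, mem_univ, true_and] at hi; simp [hi]
  rw [h1, h2, wgt]

lemma sum_wgt (q : ℝ) : ∑ x : Fin N → Bool, wgt N q x = 1 := by
  classical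
  have hsum : ∀ i : Fin N, (∑ b : Bool, if b = true then q else 1-q) = 1 := by
    intro i; simp
  calc ∑ x : Fin N → Bool, wgt N q x
      = ∑ x : Fin N → Bool, ∏ i, (if x i = true then q else 1-q) :=
        Finset.sum_congr rfl (fun x _ => wgt_prod q x)
    _ = ∏ i : Fin N, ∑ b : Bool, (if b = true then q else 1-q) := by
        rw [Finset.prod_univ_sum (fun _ : Fin N => (univ : Finset Bool))
          (fun _ b => if b = true then q else 1-q), Fintype.piFinset_univ]
    _ = 1 := by rw [Finset.prod_congr rfl (fun i _ => hsum i), Finset.prod_const_one]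

lemma wgt_nonneg {q : ℝ} (h0 : 0 ≤ q) (h1 : q ≤ 1) (x : Fin N → Bool) : 0 ≤ wgt N q x := by
  apply mul_nonneg (pow_nonneg h0 _) (pow_nonneg (by linarith) _)

lemma split_kernel (a b : ℝ) (z : Fin N → Bool) :
    ∑ x : Fin N → Bool, ∑ y : Fin N → Bool,
      (if x ⊔ y = z then wgt N a x * wgt N b y else 0) = wgt N (a + b - a*b) z := by
  classical
  have key : ∀ (x y : Fin N → Bool),
      (if x ⊔ y = z then wgt N a x * wgt N b y else 0)
      = ∏ i, ((if x i = true then a else 1-a) * (if y i = true then b else 1-b) *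
              (if (x i || y i) = z i then 1 else 0)) := by
    intro x y
    rw [Finset.prod_mul_distrib, Finset.prod_mul_distrib, ← wgt_prod, ← wgt_prod]
    rw [Finset.prod_boole]
    have hiff : (x ⊔ y = z) ↔ (∀ i ∈ (univ : Finset (Fin N)), (x i || y i) = z i) := by
      constructor
      · intro h i _; rw [← sup_apply_or, h]
      · intro h; funext i; rw [sup_apply_or]; exact h i (mem_univ i)
    by_cases h : x ⊔ y = z
    · rw [if_pos h, if_pos (hiff.1 h)]; ring
    · rw [if_neg h, if_neg (fun hh => h (hiff.2 hh))]; ring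
  calc ∑ x : Fin N → Bool, ∑ y : Fin N → Bool,
      (if x ⊔ y = z then wgt N a x * wgt N b y else 0)
      = ∑ p : (Fin N → Bool) × (Fin N → Bool),
          (if p.1 ⊔ p.2 = z then wgt N a p.1 * wgt N b p.2 else 0) := by
        rw [← Finset.univ_product_univ, Finset.sum_product]
    _ = ∑ v : Fin N → Bool × Bool,
          ∏ i, ((if (v i).1 = true then a else 1-a) * (if (v i).2 = true then b else 1-b) *
              (if ((v i).1 || (v i).2) = z i then 1 else 0)) := by
        apply Fintype.sum_equiv (Equiv.arrowProdEquivProdArrow (Fin N) (fun _ => Bool) (fun _ => Bool)).symm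
        intro p
        rw [key p.1 p.2]
        rfl
    _ = ∏ i, ∑ u : Bool × Bool,
          ((if u.1 = true then a else 1-a) * (if u.2 = true then b else 1-b) *
              (if (u.1 || u.2) = z i then 1 else 0)) := by
        rw [Finset.prod_univ_sum (fun _ : Fin N => (univ : Finset (Bool × Bool)))]
        rw [Fintype.piFinset_univ]
    _ = ∏ i, (if z i = true then a + b - a*b else 1 - (a + b - a*b)) := by
        apply Finset.prod_congr rfl
        intro i _
        rw [Fintype.sum_prod_type]
        cases hz : z i <;> simp [hz] <;> ring
    _ = wgt N (a + b - a*b) z := (wgt_prod _ z).symm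

lemma split (a b : ℝ) (f : (Fin N → Bool) → ℝ) :
    ∑ z : Fin N → Bool, wgt N (a + b - a*b) z * f z
    = ∑ x : Fin N → Bool, ∑ y : Fin N → Bool, wgt N a x * wgt N b y * f (x ⊔ y) := by
  classical
  have h1 : ∀ z, wgt N (a+b-a*b) z * f z
      = (∑ x : Fin N → Bool, ∑ y : Fin N → Bool,
          (if x ⊔ y = z then wgt N a x * wgt N b y else 0)) * f z := by
    intro z; rw [split_kernel]
  rw [Finset.sum_congr rfl (fun z _ => h1 z)]
  simp only [Finset.sum_mul]
  rw [Finset.sum_comm]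
  refine Finset.sum_congr rfl (fun x _ => ?_)
  rw [Finset.sum_comm]
  refine Finset.sum_congr rfl (fun y _ => ?_)
  simp only [ite_mul, zero_mul]
  rw [Finset.sum_ite_eq (univ : Finset (Fin N → Bool)) (x ⊔ y)
    (fun z => wgt N a x * wgt N b y * f z)]
  simp

open Classical in
lemma mu_eq (q : ℝ) (F : Set (Fin N → Bool)) :
    mu N q F = ∑ x : Fin N → Bool, wgt N q x * ind F x := by
  rw [mu]
  refine Finset.sum_congr rfl (fun x _ => ?_)
  rw [ind, wgt]
  by_cases h : x ∈ F <;> simp [h]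

lemma ind_nonneg (F : Set (Fin N → Bool)) (x : Fin N → Bool) : 0 ≤ ind F x := by
  rw [ind]; split <;> norm_num

lemma ind_le_one (F : Set (Fin N → Bool)) (x : Fin N → Bool) : ind F x ≤ 1 := by
  rw [ind]; split <;> norm_num

lemma ind_mono {F : Set (Fin N → Bool)} (hF : MonotoneProp F) {x y : Fin N → Bool}
    (h : x ≤ y) : ind F x ≤ ind F y := by
  rw [ind, ind]
  by_cases hx : x ∈ F
  · rw [if_pos hx, if_pos (hF x y hx h)]
  · rw [if_neg hx]; split <;> norm_num

lemma mu_mono {F : Set (Fin N → Bool)} (hF : MonotoneProp F) {a c : ℝ}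
    (h0 : 0 ≤ a) (h1 : a ≤ c) (h2 : c ≤ 1) : mu N a F ≤ mu N c F := by
  rcases eq_or_lt_of_le (h1.trans h2) with heq | hlt
  · have hac : a = c := le_antisymm h1 (by rw [heq]; exact h2)
    rw [hac]
  · set b := (c - a) / (1 - a) with hb
    have hb0 : 0 ≤ b := div_nonneg (by linarith) (by linarith)
    have hb1 : b ≤ 1 := by
      rw [hb, div_le_one (by linarith)]; linarith
    have h1a : (1:ℝ) - a ≠ 0 := by linarith
    have hkey : (c - a) / (1 - a) * (1 - a) = c - a := div_mul_cancel₀ _ h1a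
    have hc : a + b - a * b = c := by
      rw [hb]; linear_combination hkey
    rw [mu_eq, mu_eq, ← hc, split]
    calc ∑ x : Fin N → Bool, wgt N a x * ind F x
        = ∑ x : Fin N → Bool, (wgt N a x * ind F x) * ∑ y : Fin N → Bool, wgt N b y := by
          rw [Finset.sum_congr rfl (fun x _ => ?_)]
          rw [sum_wgt, mul_one]
      _ = ∑ x : Fin N → Bool, ∑ y : Fin N → Bool, wgt N a x * wgt N b y * ind F x := by
          refine Finset.sum_congr rfl (fun x _ => ?_)
          rw [Finset.mul_sum]
          refine Finset.sum_congr rfl (fun y _ => ?_)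
          ring
      _ ≤ ∑ x : Fin N → Bool, ∑ y : Fin N → Bool, wgt N a x * wgt N b y * ind F (x ⊔ y) := by
          refine Finset.sum_le_sum (fun x _ => Finset.sum_le_sum (fun y _ => ?_))
          apply mul_le_mul_of_nonneg_left (ind_mono hF le_sup_left)
          exact mul_nonneg (wgt_nonneg h0 (by linarith) x) (wgt_nonneg hb0 hb1 y)

lemma card_le_pow (S : Fin N → Bool) [DecidablePred (fun T : Fin N → Bool => T ≤ S)] :
    (univ.filter (fun T : Fin N → Bool => T ≤ S)).card ≤ 2 ^ wt S := by
  classical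
  have h := Finset.card_le_card_of_injOn
    (f := fun T : Fin N → Bool => univ.filter (fun i => T i = true))
    (s := univ.filter (fun T : Fin N → Bool => T ≤ S))
    (t := (univ.filter (fun i => S i = true)).powerset) ?_ ?_
  · calc (univ.filter (fun T : Fin N → Bool => T ≤ S)).card
        ≤ ((univ.filter (fun i => S i = true)).powerset).card := h
      _ = 2 ^ wt S := by rw [Finset.card_powerset, wt]
  · intro T hT
    rw [Finset.mem_coe, mem_filter] at hT
    rw [Finset.mem_coe, Finset.mem_powerset]
    intro i hi
    simp only [mem_filter] at hi ⊢
    exact ⟨hi.1, le_iff_mem.1 hT.2 i hi.2⟩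
  · intro T1 h1 T2 h2 heq
    simp only [Finset.coe_filter, Set.mem_setOf_eq] at h1 h2
    funext i
    have heq' : univ.filter (fun i => T1 i = true) = univ.filter (fun i => T2 i = true) := heq
    have hmem : (i ∈ univ.filter (fun i => T1 i = true)) ↔
        (i ∈ univ.filter (fun i => T2 i = true)) := by rw [heq']
    simp only [mem_filter, mem_univ, true_and] at hmem
    cases hh1 : T1 i <;> cases hh2 : T2 i
    · rfl
    · exact absurd (hmem.2 hh2) (by rw [hh1]; simp)
    · exact absurd (hmem.1 hh1) (by rw [hh2]; simp)
    · rfl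

lemma wt_top : wt (⊤ : Fin N → Bool) = N := by
  rw [wt]
  have : (univ.filter (fun i => (⊤ : Fin N → Bool) i = true)) = univ := by
    apply Finset.filter_true_of_mem
    intro i _
    rfl
  rw [this, Finset.card_univ, Fintype.card_fin]

lemma eq_top_of_wt (x : Fin N → Bool) (h : wt x = N) : x = ⊤ :=
  eq_of_le_of_wt_le le_top (by rw [wt_top, h])

lemma exists_minimal {F : Set (Fin N → Bool)} :
    ∀ T ∈ F, ∃ s, s ∈ F ∧ s ≤ T ∧ ∀ y ∈ F, y ≤ s → y = s := by
  have main : ∀ n : ℕ, ∀ T ∈ F, wt T ≤ n → ∃ s, s ∈ F ∧ s ≤ T ∧ ∀ y ∈ F, y ≤ s → y = s := by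
    intro n
    induction n with
    | zero =>
      intro T hT hwt
      refine ⟨T, hT, le_rfl, fun y hy hle => ?_⟩
      have h1 : wt y ≤ wt T := wt_le_wt_of_le hle
      exact eq_of_le_of_wt_le hle (by omega)
    | succ n IHn =>
      intro T hT hwt
      by_cases hmin : ∀ y ∈ F, y ≤ T → y = T
      · exact ⟨T, hT, le_rfl, hmin⟩
      · push_neg at hmin
        obtain ⟨y, hyF, hyle, hyne⟩ := hmin
        have hwty : wt y < wt T := by
          have h1 : wt y ≤ wt T := wt_le_wt_of_le hyle
          rcases lt_or_eq_of_le h1 with h | h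
          · exact h
          · exact absurd (eq_of_le_of_wt_le hyle (le_of_eq h.symm)) hyne
        obtain ⟨s, hsF, hsle, hsmin⟩ := IHn y hyF (by omega)
        exact ⟨s, hsF, le_trans hsle hyle, hsmin⟩
  intro T hT
  exact main (wt T) T hT le_rfl

open Classical in
noncomputable def mini (F : Set (Fin N → Bool)) (T : Fin N → Bool) : Fin N → Bool :=
  if h : ∃ s, s ∈ F ∧ s ≤ T ∧ ∀ y ∈ F, y ≤ s → y = s then Classical.choose h else ⊥

lemma mini_spec {F : Set (Fin N → Bool)} {T : Fin N → Bool} (hT : T ∈ F) :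
    mini F T ∈ F ∧ mini F T ≤ T ∧ ∀ y ∈ F, y ≤ mini F T → y = mini F T := by
  rw [mini, dif_pos (exists_minimal T hT)]
  exact Classical.choose_spec (exists_minimal T hT)

open Classical in
noncomputable def fragset (ν : (Fin N → Bool) → ℝ) (W S : Fin N → Bool) :
    Finset (Fin N → Bool) :=
  univ.filter (fun T => (∃ S', ν S' ≠ 0 ∧ S' ⊓ Wᶜ = T) ∧ T ≤ S)

lemma fragset_nonempty {ν : (Fin N → Bool) → ℝ} {W S : Fin N → Bool} (h : ν S ≠ 0) :
    (fragset ν W S).Nonempty := by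
  classical
  refine ⟨S ⊓ Wᶜ, ?_⟩
  rw [fragset]
  simp only [mem_filter, mem_univ, true_and]
  exact ⟨⟨S, h, rfl⟩, inf_le_left⟩

open Classical in
noncomputable def frag (ν : (Fin N → Bool) → ℝ) (W S : Fin N → Bool) : Fin N → Bool :=
  if h : (fragset ν W S).Nonempty then
    Classical.choose (Finset.exists_min_image (fragset ν W S) wt h)
  else ⊥

lemma frag_spec {ν : (Fin N → Bool) → ℝ} {W S : Fin N → Bool} (h : ν S ≠ 0) :
    frag ν W S ∈ fragset ν W S ∧ ∀ T ∈ fragset ν W S, wt (frag ν W S) ≤ wt T := by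
  classical
  rw [frag, dif_pos (fragset_nonempty h)]
  obtain ⟨hmem, hmin⟩ := Classical.choose_spec
    (Finset.exists_min_image (fragset ν W S) wt (fragset_nonempty h))
  exact ⟨hmem, hmin⟩

lemma frag_le {ν : (Fin N → Bool) → ℝ} {W S : Fin N → Bool} (h : ν S ≠ 0) :
    frag ν W S ≤ S := by
  have := (frag_spec (W := W) h).1
  rw [fragset] at this
  simp only [mem_filter, mem_univ, true_and] at this
  exact this.2

lemma frag_exists {ν : (Fin N → Bool) → ℝ} {W S : Fin N → Bool} (h : ν S ≠ 0) :
    ∃ S', ν S' ≠ 0 ∧ S' ⊓ Wᶜ = frag ν W S := by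
  have := (frag_spec (W := W) h).1
  rw [fragset] at this
  simp only [mem_filter, mem_univ, true_and] at this
  exact this.1

lemma frag_le_compl {ν : (Fin N → Bool) → ℝ} {W S : Fin N → Bool} (h : ν S ≠ 0) :
    frag ν W S ≤ Wᶜ := by
  obtain ⟨S', _, hS'⟩ := frag_exists (W := W) h
  rw [← hS']
  exact inf_le_right

lemma frag_disj {ν : (Fin N → Bool) → ℝ} {W S : Fin N → Bool} (h : ν S ≠ 0) :
    frag ν W S ⊓ W = ⊥ := by
  have h1 : frag ν W S ⊓ W ≤ Wᶜ ⊓ W := inf_le_inf_right W (frag_le_compl h)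
  rw [compl_inf_eq_bot] at h1
  exact le_bot_iff.1 h1

/-- Key minimality claim: the minimal fragment is contained in every support element
inside `W ⊔ frag`. -/
lemma frag_le_of_supp_le {ν : (Fin N → Bool) → ℝ} {W S : Fin N → Bool} (h : ν S ≠ 0)
    {S'' : Fin N → Bool} (h2 : ν S'' ≠ 0) (h3 : S'' ≤ W ⊔ frag ν W S) :
    frag ν W S ≤ S'' := by
  classical
  set T := frag ν W S with hT
  have hU : S'' ⊓ Wᶜ ≤ T := by
    calc S'' ⊓ Wᶜ ≤ (W ⊔ T) ⊓ Wᶜ := inf_le_inf_right _ h3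
      _ = (W ⊓ Wᶜ) ⊔ (T ⊓ Wᶜ) := by rw [inf_sup_right]
      _ = T ⊓ Wᶜ := by rw [inf_compl_eq_bot, bot_sup_eq]
      _ ≤ T := inf_le_left
  have hUmem : S'' ⊓ Wᶜ ∈ fragset ν W S := by
    rw [fragset]
    simp only [mem_filter, mem_univ, true_and]
    exact ⟨⟨S'', h2, rfl⟩, hU.trans (frag_le h)⟩
  have hmin := (frag_spec h).2 _ hUmem
  have : S'' ⊓ Wᶜ = T := eq_of_le_of_wt_le hU hmin
  rw [← this]
  exact inf_le_left

open Classical in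
noncomputable def canon (ν : (Fin N → Bool) → ℝ) (W' : Fin N → Bool) : Fin N → Bool :=
  if h : ∃ S'', ν S'' ≠ 0 ∧ S'' ≤ W' then Classical.choose h else ⊥

lemma canon_spec {ν : (Fin N → Bool) → ℝ} {W' : Fin N → Bool}
    (h : ∃ S'', ν S'' ≠ 0 ∧ S'' ≤ W') :
    ν (canon ν W') ≠ 0 ∧ canon ν W' ≤ W' := by
  rw [canon, dif_pos h]
  exact Classical.choose_spec h

lemma canon_wt_le {ν : (Fin N → Bool) → ℝ} {b : ℕ} (hsupp : ∀ T, ν T ≠ 0 → wt T ≤ b)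
    (W' : Fin N → Bool) : wt (canon ν W') ≤ b := by
  by_cases h : ∃ S'', ν S'' ≠ 0 ∧ S'' ≤ W'
  · exact hsupp _ (canon_spec h).1
  · rw [canon, dif_neg h, wt_bot]
    exact Nat.zero_le b

lemma frag_le_canon {ν : (Fin N → Bool) → ℝ} {W S : Fin N → Bool} (h : ν S ≠ 0) :
    frag ν W S ≤ canon ν (W ⊔ frag ν W S) := by
  obtain ⟨S', hS'ne, hS'⟩ := frag_exists (W := W) h
  have hex : ∃ S'', ν S'' ≠ 0 ∧ S'' ≤ W ⊔ frag ν W S :=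
    ⟨S', hS'ne, le_sup_of_frag hS'⟩
  obtain ⟨hc1, hc2⟩ := canon_spec hex
  exact frag_le_of_supp_le h hc1 hc2

lemma wgt_transfer {γ : ℝ} (hγ0 : 0 < γ) {W T : Fin N → Bool} (hd : T ⊓ W = ⊥) :
    wgt N γ W = wgt N γ (W ⊔ T) * ((1 - γ)/γ) ^ wt T := by
  have h1 : wt (W ⊔ T) = wt W + wt T := by
    rw [sup_comm, wt_sup_disjoint hd, Nat.add_comm]
  have h2 : wt W + wt T ≤ N := h1 ▸ wt_le _
  rw [wgt, wgt, h1]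
  have h3 : N - wt W = (N - (wt W + wt T)) + wt T := by omega
  rw [h3, pow_add, pow_add, div_pow]
  have hγ : γ ^ wt T ≠ 0 := pow_ne_zero _ (ne_of_gt hγ0)
  field_simp

lemma sup_inf_compl_cancel {W T : Fin N → Bool} (h : T ⊓ W = ⊥) : (W ⊔ T) ⊓ Tᶜ = W := by
  have hw : W ≤ Tᶜ := by
    have : Disjoint W T := (disjoint_iff.2 h).symm
    exact this.le_compl_right
  rw [inf_sup_right, inf_compl_eq_bot, sup_bot_eq, inf_eq_left]
  exact hw

open Classical in
lemma lemA {ν : (Fin N → Bool) → ℝ} {p γ C : ℝ} {b k : ℕ}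
    (hν0 : ∀ T, 0 ≤ ν T) (hsp : IsSpread N p ν)
    (hsupp : ∀ T, ν T ≠ 0 → wt T ≤ b)
    (hγ0 : 0 < γ) (hγ1 : γ ≤ 1) (hC1 : 1 ≤ C)
    (hpx : p * ((1 - γ)/γ) ≤ 1/C) (hp0 : 0 ≤ p) :
    ∑ W : Fin N → Bool, wgt N γ W *
      (∑ S ∈ univ.filter (fun S => ν S ≠ 0 ∧ k + 1 ≤ wt (frag ν W S)), ν S)
      ≤ 2 * 2^b * (1/C)^(k+1) := by
  classical
  set x : ℝ := (1 - γ)/γ with hxdef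
  have hx0 : 0 ≤ x := div_nonneg (by linarith) (le_of_lt hγ0)
  have hpx0 : 0 ≤ p * x := mul_nonneg hp0 hx0
  have hC0 : (0:ℝ) < C := lt_of_lt_of_le one_pos hC1
  have hinvC0 : (0:ℝ) ≤ 1/C := by positivity
  have hinvC1 : (1:ℝ)/C ≤ 1 := by
    rw [div_le_one hC0]; exact hC1
  have hpx1 : p * x ≤ 1 := le_trans hpx hinvC1
  set u : ((Fin N → Bool) × (Fin N → Bool) × (Fin N → Bool)) → ℝ :=
    fun r => wgt N γ r.1 * x ^ wt r.2.1 * ν r.2.2 with hu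
  have hu0 : ∀ r, 0 ≤ u r := fun r =>
    mul_nonneg (mul_nonneg (wgt_nonneg (le_of_lt hγ0) hγ1 _) (pow_nonneg hx0 _)) (hν0 _)
  set Φ : ((Fin N → Bool) × (Fin N → Bool)) →
      ((Fin N → Bool) × (Fin N → Bool) × (Fin N → Bool)) :=
    fun q => (q.1 ⊔ frag ν q.1 q.2, frag ν q.1 q.2, q.2) with hΦ
  set dom := (univ ×ˢ univ).filter
    (fun q : (Fin N → Bool) × (Fin N → Bool) => ν q.2 ≠ 0 ∧ k + 1 ≤ wt (frag ν q.1 q.2))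
    with hdom
  set tgt := (univ ×ˢ univ ×ˢ univ).filter
    (fun r : (Fin N → Bool) × (Fin N → Bool) × (Fin N → Bool) =>
      r.2.1 ≤ canon ν r.1 ∧ k + 1 ≤ wt r.2.1 ∧ r.2.1 ≤ r.2.2) with htgt
  -- Step 1: LHS as a sum over dom
  have step1 : ∑ W : Fin N → Bool, wgt N γ W *
      (∑ S ∈ univ.filter (fun S => ν S ≠ 0 ∧ k + 1 ≤ wt (frag ν W S)), ν S)
      = ∑ q ∈ dom, wgt N γ q.1 * ν q.2 := by
    rw [hdom, Finset.sum_filter, Finset.sum_product]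
    refine Finset.sum_congr rfl (fun W _ => ?_)
    rw [Finset.mul_sum, Finset.sum_filter]
  -- Step 2: pointwise transfer
  have step2 : ∀ q ∈ dom, wgt N γ q.1 * ν q.2 = u (Φ q) := by
    rintro ⟨W, S⟩ hq
    rw [hdom, mem_filter] at hq
    obtain ⟨-, hS, -⟩ := hq
    rw [hu, hΦ]
    simp only
    rw [← wgt_transfer hγ0 (frag_disj hS)]
  -- Step 3: injectivity and sum over image
  have hinj : ∀ q1 ∈ dom, ∀ q2 ∈ dom, Φ q1 = Φ q2 → q1 = q2 := by
    rintro ⟨W1, S1⟩ h1 ⟨W2, S2⟩ h2 heq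
    rw [hdom, mem_filter] at h1 h2
    obtain ⟨-, hS1, -⟩ := h1
    obtain ⟨-, hS2, -⟩ := h2
    rw [hΦ] at heq
    simp only [Prod.mk.injEq] at heq
    obtain ⟨hW, hT, hS⟩ := heq
    subst hS
    have hT1 : frag ν W1 S1 = frag ν W2 S1 := hT
    have : W1 = W2 := by
      have e1 : (W1 ⊔ frag ν W1 S1) ⊓ (frag ν W1 S1)ᶜ = W1 :=
        sup_inf_compl_cancel (frag_disj hS1)
      have e2 : (W2 ⊔ frag ν W2 S1) ⊓ (frag ν W2 S1)ᶜ = W2 :=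
        sup_inf_compl_cancel (frag_disj hS1)
      rw [← e1, ← e2, hW, hT1]
    rw [this]
  have step3 : ∑ q ∈ dom, u (Φ q) = ∑ r ∈ dom.image Φ, u r :=
    (Finset.sum_image hinj).symm
  -- Step 4: image ⊆ tgt
  have step4 : dom.image Φ ⊆ tgt := by
    intro r hr
    rw [Finset.mem_image] at hr
    obtain ⟨⟨W, S⟩, hq, rfl⟩ := hr
    rw [hdom, mem_filter] at hq
    obtain ⟨-, hS, hk⟩ := hq
    rw [htgt, mem_filter]
    refine ⟨by simp, ?_, hk, frag_le hS⟩
    exact frag_le_canon hS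
  have step5 : ∑ r ∈ dom.image Φ, u r ≤ ∑ r ∈ tgt, u r :=
    Finset.sum_le_sum_of_subset_of_nonneg step4 (fun r _ _ => hu0 r)
  -- Step 6: bound the target sum
  have step6 : ∑ r ∈ tgt, u r ≤ 2 * 2^b * (1/C)^(k+1) := by
    rw [htgt, Finset.sum_filter, Finset.sum_product]
    have inner_bound : ∀ W' : Fin N → Bool,
        (∑ y ∈ (univ ×ˢ univ : Finset ((Fin N → Bool) × (Fin N → Bool))),
          if y.1 ≤ canon ν W' ∧ k + 1 ≤ wt y.1 ∧ y.1 ≤ y.2 then u (W', y) else 0)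
        ≤ wgt N γ W' * (2^b * (2 * (1/C)^(k+1))) := by
      intro W'
      rw [Finset.sum_product]
      have hTbound : ∀ T : Fin N → Bool,
          (∑ S : Fin N → Bool,
            if T ≤ canon ν W' ∧ k + 1 ≤ wt T ∧ T ≤ S then u (W', T, S) else 0)
          ≤ (if T ≤ canon ν W' then wgt N γ W' * (2 * (1/C)^(k+1)) else 0) := by
        intro T
        by_cases hA : T ≤ canon ν W'
        · by_cases hB : k + 1 ≤ wt T
          · rw [if_pos hA]
            have hsum : (∑ S : Fin N → Bool,
                if T ≤ canon ν W' ∧ k + 1 ≤ wt T ∧ T ≤ S then u (W', T, S) else 0)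
                = wgt N γ W' * x ^ wt T *
                  (∑ S ∈ univ.filter (fun S => T ≤ S), ν S) := by
              rw [Finset.sum_filter, Finset.mul_sum]
              refine Finset.sum_congr rfl (fun S _ => ?_)
              by_cases hC' : T ≤ S
              · rw [if_pos ⟨hA, hB, hC'⟩, if_pos hC']
              · rw [if_neg (fun hh => hC' hh.2.2), if_neg hC', mul_zero]
            rw [hsum]
            have hspread := hsp T
            have hwnn : 0 ≤ wgt N γ W' := wgt_nonneg (le_of_lt hγ0) hγ1 _
            have hxp : 0 ≤ x ^ wt T := pow_nonneg hx0 _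
            calc wgt N γ W' * x ^ wt T * (∑ S ∈ univ.filter (fun S => T ≤ S), ν S)
                ≤ wgt N γ W' * x ^ wt T * (2 * p ^ wt T) := by
                  apply mul_le_mul_of_nonneg_left hspread (mul_nonneg hwnn hxp)
              _ = wgt N γ W' * (2 * (p * x) ^ wt T) := by
                  rw [mul_pow]; ring
              _ ≤ wgt N γ W' * (2 * (1/C)^(k+1)) := by
                  apply mul_le_mul_of_nonneg_left _ hwnn
                  apply mul_le_mul_of_nonneg_left _ (by norm_num : (0:ℝ) ≤ 2)
                  calc (p * x) ^ wt T ≤ (p * x) ^ (k+1) :=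
                        pow_le_pow_of_le_one hpx0 hpx1 hB
                    _ ≤ (1/C)^(k+1) := pow_le_pow_left₀ hpx0 hpx _
          · rw [if_pos hA]
            have : (∑ S : Fin N → Bool,
                if T ≤ canon ν W' ∧ k + 1 ≤ wt T ∧ T ≤ S then u (W', T, S) else 0) = 0 := by
              apply Finset.sum_eq_zero
              intro S _
              rw [if_neg (fun hh => hB hh.2.1)]
            rw [this]
            have hwnn : 0 ≤ wgt N γ W' := wgt_nonneg (le_of_lt hγ0) hγ1 _
            positivity
        · rw [if_neg hA]
          apply le_of_eq
          apply Finset.sum_eq_zero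
          intro S _
          rw [if_neg (fun hh => hA hh.1)]
      calc (∑ T : Fin N → Bool, ∑ S : Fin N → Bool,
            if T ≤ canon ν W' ∧ k + 1 ≤ wt T ∧ T ≤ S then u (W', T, S) else 0)
          ≤ ∑ T : Fin N → Bool,
            (if T ≤ canon ν W' then wgt N γ W' * (2 * (1/C)^(k+1)) else 0) :=
            Finset.sum_le_sum (fun T _ => hTbound T)
        _ = ((univ.filter (fun T : Fin N → Bool => T ≤ canon ν W')).card : ℝ) *
            (wgt N γ W' * (2 * (1/C)^(k+1))) := by
            rw [← Finset.sum_filter, Finset.sum_const, nsmul_eq_mul]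
        _ ≤ (2^b : ℝ) * (wgt N γ W' * (2 * (1/C)^(k+1))) := by
            apply mul_le_mul_of_nonneg_right
            · have h1 := card_le_pow (canon ν W')
              have h2 : (2:ℕ) ^ wt (canon ν W') ≤ 2^b :=
                Nat.pow_le_pow_right (by norm_num) (canon_wt_le hsupp W')
              have := le_trans h1 h2
              calc ((univ.filter (fun T : Fin N → Bool => T ≤ canon ν W')).card : ℝ)
                  ≤ ((2^b : ℕ) : ℝ) := by exact_mod_cast this
                _ = (2^b : ℝ) := by push_cast; ring
            · have hwnn : 0 ≤ wgt N γ W' := wgt_nonneg (le_of_lt hγ0) hγ1 _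
              positivity
        _ = wgt N γ W' * (2^b * (2 * (1/C)^(k+1))) := by ring
    calc (∑ W' : Fin N → Bool,
          ∑ y ∈ (univ ×ˢ univ : Finset ((Fin N → Bool) × (Fin N → Bool))),
          if y.1 ≤ canon ν W' ∧ k + 1 ≤ wt y.1 ∧ y.1 ≤ y.2 then u (W', y) else 0)
        ≤ ∑ W' : Fin N → Bool, wgt N γ W' * (2^b * (2 * (1/C)^(k+1))) :=
          Finset.sum_le_sum (fun W' _ => inner_bound W')
      _ = (∑ W' : Fin N → Bool, wgt N γ W') * (2^b * (2 * (1/C)^(k+1))) := by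
          rw [← Finset.sum_mul]
      _ = 2 * 2^b * (1/C)^(k+1) := by rw [sum_wgt]; ring
  rw [step1, Finset.sum_congr rfl step2, step3]
  exact le_trans step5 step6

noncomputable def QQ (γ : ℝ) : ℕ → ℝ
  | 0 => 0
  | (b+1) => γ + (1-γ) * QQ γ ((b+1)/2)
decreasing_by exact Nat.div_lt_self (Nat.succ_pos b) (by norm_num)

noncomputable def eps : ℕ → ℝ
  | 0 => 0
  | (b+1) => (1/256 : ℝ)^(((b+1)/2)+1) + eps ((b+1)/2)
decreasing_by exact Nat.div_lt_self (Nat.succ_pos b) (by norm_num)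

lemma QQ_zero (γ : ℝ) : QQ γ 0 = 0 := by simp [QQ]
lemma QQ_succ (γ : ℝ) (b : ℕ) : QQ γ (b+1) = γ + (1-γ) * QQ γ ((b+1)/2) := by
  rw [QQ]
lemma eps_zero : eps 0 = 0 := by simp [eps]
lemma eps_succ (b : ℕ) : eps (b+1) = (1/256 : ℝ)^(((b+1)/2)+1) + eps ((b+1)/2) := by
  rw [eps]

lemma QQ_mem {γ : ℝ} (h0 : 0 ≤ γ) (h1 : γ ≤ 1) : ∀ b, 0 ≤ QQ γ b ∧ QQ γ b ≤ 1 := by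
  intro b
  induction b using Nat.strong_induction_on with
  | _ b IH =>
    match b with
    | 0 => rw [QQ_zero]; norm_num
    | (b+1) =>
      rw [QQ_succ]
      have hj := IH ((b+1)/2) (Nat.div_lt_self (Nat.succ_pos b) (by norm_num))
      constructor
      · nlinarith [hj.1, hj.2]
      · nlinarith [hj.1, hj.2]

lemma eps_nonneg : ∀ b, 0 ≤ eps b := by
  intro b
  induction b using Nat.strong_induction_on with
  | _ b IH =>
    match b with
    | 0 => rw [eps_zero]
    | (b+1) =>
      rw [eps_succ]
      have hj := IH ((b+1)/2) (Nat.div_lt_self (Nat.succ_pos b) (by norm_num))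
      positivity

lemma eps_le : ∀ b, eps b ≤ 2 * (1/256 : ℝ) - (1/256 : ℝ)^(b/2+1) := by
  intro b
  induction b using Nat.strong_induction_on with
  | _ b IH =>
    match b with
    | 0 => rw [eps_zero]; norm_num
    | (b+1) =>
      rw [eps_succ]
      set j := (b+1)/2 with hj
      have hjlt : j < b + 1 := Nat.div_lt_self (Nat.succ_pos b) (by norm_num)
      have hIH := IH j hjlt
      have hw : (0:ℝ) < 1/256 := by norm_num
      have hw1 : (1/256 : ℝ) ≤ 1 := by norm_num
      rcases Nat.eq_zero_or_pos j with hj0 | hj1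
      · rw [hj0, eps_zero]
        norm_num
      · have hkey : (2:ℝ) * (1/256)^(j+1) ≤ (1/256)^(j/2+1) := by
          have hexp : j + 1 = (j/2 + 1) + (j - j/2) := by omega
          have hexp2 : 1 ≤ j - j/2 := by omega
          rw [hexp, pow_add]
          have h1 : ((1:ℝ)/256)^(j - j/2) ≤ (1/256)^1 :=
            pow_le_pow_of_le_one (le_of_lt hw) hw1 hexp2
          have h2 : (0:ℝ) ≤ (1/256)^(j/2+1) := by positivity
          nlinarith [h2, h1, pow_nonneg (le_of_lt hw) (j/2+1)]
        have hIH' : eps j ≤ 2 * (1/256 : ℝ) - (1/256 : ℝ)^(j/2+1) := hIH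
        have : (1/256 : ℝ)^(j+1) + eps j ≤ 2 * (1/256) - (1/256)^(j+1) := by
          nlinarith [hkey]
        exact this

lemma QQ_le_log {γ : ℝ} (h0 : 0 ≤ γ) (h1 : γ ≤ 1) :
    ∀ b : ℕ, 1 ≤ b → QQ γ b ≤ γ * (Nat.log 2 b + 1) := by
  intro b
  induction b using Nat.strong_induction_on with
  | _ b IH =>
    match b with
    | 0 => intro h; omega
    | (b+1) =>
      intro _
      rw [QQ_succ]
      set j := (b+1)/2 with hj
      have hjlt : j < b + 1 := Nat.div_lt_self (Nat.succ_pos b) (by norm_num)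
      rcases Nat.eq_zero_or_pos j with hj0 | hj1
      · rw [hj0, QQ_zero, mul_zero, add_zero]
        have : (0:ℝ) ≤ (Nat.log 2 (b+1) : ℝ) := by positivity
        nlinarith
      · have hIH := IH j hjlt hj1
        have hQj := QQ_mem h0 h1 j
        have hb2 : 2 ≤ b + 1 := by omega
        have hlog : Nat.log 2 j = Nat.log 2 (b+1) - 1 := by
          rw [hj, Nat.log_div_base 2 (b+1)]
        have hlog1 : 1 ≤ Nat.log 2 (b+1) :=
          (Nat.le_log_iff_pow_le (by norm_num) (by omega)).2 (by omega)
        have hcast : (Nat.log 2 j : ℝ) + 1 = (Nat.log 2 (b+1) : ℝ) := by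
          rw [hlog]
          have : Nat.log 2 (b+1) - 1 + 1 = Nat.log 2 (b+1) := by omega
          exact_mod_cast congrArg (Nat.cast : ℕ → ℝ) this
        calc γ + (1-γ) * QQ γ j ≤ γ + QQ γ j := by nlinarith [hQj.1, hQj.2]
          _ ≤ γ + γ * (Nat.log 2 j + 1) := by linarith
          _ = γ * ((Nat.log 2 j + 1) + 1) := by ring
          _ = γ * (Nat.log 2 (b+1) + 1) := by rw [hcast]

lemma pow_bound (b j : ℕ) (h : b + 2 ≤ 2*j + 2) :
    2 * (2:ℝ)^(b+1) * (1/1024)^(j+1) ≤ (1/256 : ℝ)^(j+1) := by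
  have e1 : ((1:ℝ)/256)^(j+1) = 2^(2*j+2) * (1/1024)^(j+1) := by
    have : (2:ℝ)^(2*j+2) = 4^(j+1) := by
      rw [show 2*j+2 = 2*(j+1) by ring, pow_mul]
      norm_num
    rw [this, ← mul_pow]
    norm_num
  have e2 : 2 * (2:ℝ)^(b+1) = 2^(b+2) := by ring
  rw [e1, e2]
  apply mul_le_mul_of_nonneg_right _ (by positivity)
  exact pow_le_pow_right₀ (by norm_num) h

open Classical in
noncomputable def succInd (ν : (Fin N → Bool) → ℝ) (W : Fin N → Bool) : ℝ :=
  if ∃ T, ν T ≠ 0 ∧ T ≤ W then 1 else 0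

lemma succInd_nonneg (ν : (Fin N → Bool) → ℝ) (W : Fin N → Bool) : 0 ≤ succInd ν W := by
  rw [succInd]; split <;> norm_num

lemma fiber_filter_sum {α β : Type*} [Fintype β] [DecidableEq β] (s : Finset α) (g : α → β)
    (P : β → Prop) [DecidablePred P] (f : α → ℝ) [DecidableEq α] :
    ∑ T ∈ univ.filter P, ∑ S ∈ s.filter (fun S => g S = T), f S
      = ∑ S ∈ s.filter (fun S => P (g S)), f S := by
  classical
  rw [Finset.sum_filter]
  have key : ∀ T, (if P T then (∑ S ∈ s.filter (fun S => g S = T), f S) else 0)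
      = ∑ S ∈ s.filter (fun S => g S = T), (if P (g S) then f S else 0) := by
    intro T
    by_cases h : P T
    · rw [if_pos h]
      refine Finset.sum_congr rfl (fun S hS => ?_)
      rw [mem_filter] at hS
      rw [hS.2, if_pos h]
    · rw [if_neg h]
      symm
      apply Finset.sum_eq_zero
      intro S hS
      rw [mem_filter] at hS
      rw [hS.2, if_neg h]
  rw [Finset.sum_congr rfl (fun T _ => key T)]
  rw [Finset.sum_fiberwise_of_maps_to (fun S _ => mem_univ (g S))]
  rw [← Finset.sum_filter]

open Classical in
lemma main_ind {p : ℝ} (hp0 : 0 < p) (hp1 : p < 1) :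
    ∀ b : ℕ, ∀ ν : (Fin N → Bool) → ℝ,
      (∀ T, 0 ≤ ν T) → ((∑ T : Fin N → Bool, ν T) ≤ 1) → IsSpread N p ν →
      (∀ T, ν T ≠ 0 → wt T ≤ b) →
      (∑ T : Fin N → Bool, ν T) - eps b ≤
        ∑ W : Fin N → Bool, wgt N (QQ (min 1 (1024*p)) b) W * succInd ν W := by
  classical
  set γ : ℝ := min 1 (1024*p) with hγdef
  have hγ0 : 0 < γ := lt_min one_pos (by linarith)
  have hγ1 : γ ≤ 1 := min_le_left _ _
  have hpx : p * ((1 - γ)/γ) ≤ 1/1024 := by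
    rcases le_or_gt (1024*p) 1 with h | h
    · have hγeq : γ = 1024*p := min_eq_right h
      have h1 : p * ((1-γ)/γ) ≤ p * (1/γ) := by
        apply mul_le_mul_of_nonneg_left _ (le_of_lt hp0)
        exact (div_le_div_iff_of_pos_right hγ0).2 (by linarith)
      have h2 : p * (1/γ) = 1/1024 := by
        rw [hγeq, mul_one_div, div_eq_div_iff (by positivity) (by norm_num)]
        ring
      rw [← h2]
      exact h1
    · have : γ = 1 := min_eq_left (by linarith)
      rw [this]
      norm_num
  intro b
  induction b using Nat.strong_induction_on with
  | _ b IH =>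
    intro ν hν0 hν1 hsp hsupp
    match b with
    | 0 =>
      rw [eps_zero, QQ_zero]
      by_cases hbot : ν ⊥ ≠ 0
      · have hsucc : ∀ W : Fin N → Bool, succInd ν W = 1 := by
          intro W
          rw [succInd, if_pos ⟨⊥, hbot, bot_le⟩]
        calc (∑ T : Fin N → Bool, ν T) - 0 ≤ 1 := by linarith
          _ = ∑ W : Fin N → Bool, wgt N 0 W := (sum_wgt 0).symm
          _ = ∑ W : Fin N → Bool, wgt N 0 W * succInd ν W := by
              refine Finset.sum_congr rfl (fun W _ => ?_)
              rw [hsucc W, mul_one]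
      · push_neg at hbot
        have hzero : ∀ T, ν T = 0 := by
          intro T
          by_contra hT
          have := wt_eq_zero (Nat.le_zero.1 (hsupp T hT))
          rw [this] at hT
          exact hT hbot
        have h1 : (∑ T : Fin N → Bool, ν T) = 0 := Finset.sum_eq_zero (fun T _ => hzero T)
        rw [h1]
        have : (0:ℝ) ≤ ∑ W : Fin N → Bool, wgt N 0 W * succInd ν W :=
          Finset.sum_nonneg (fun W _ => mul_nonneg (wgt_nonneg le_rfl zero_le_one W)
            (succInd_nonneg ν W))
        linarith
    | (b+1) =>
      set j := (b+1)/2 with hjdef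
      have hjlt : j < b + 1 := Nat.div_lt_self (Nat.succ_pos b) (by norm_num)
      have hQj := QQ_mem (le_of_lt hγ0) hγ1 j
      -- the one-round pushforward for each W₁
      set goodset : (Fin N → Bool) → Finset (Fin N → Bool) :=
        fun W₁ => univ.filter (fun S => ν S ≠ 0 ∧ wt (frag ν W₁ S) ≤ j) with hgoodset
      set ν' : (Fin N → Bool) → (Fin N → Bool) → ℝ :=
        fun W₁ T => ∑ S ∈ (goodset W₁).filter (fun S => frag ν W₁ S = T), ν S with hν'
      have hgood_mem : ∀ W₁ S, S ∈ goodset W₁ ↔ (ν S ≠ 0 ∧ wt (frag ν W₁ S) ≤ j) := by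
        intro W₁ S
        rw [hgoodset]
        simp only [mem_filter, mem_univ, true_and]
      -- (a) nonneg
      have ha : ∀ W₁ T, 0 ≤ ν' W₁ T := by
        intro W₁ T
        exact Finset.sum_nonneg (fun S _ => hν0 S)
      -- (b) total
      have hb : ∀ W₁, (∑ T : Fin N → Bool, ν' W₁ T) = ∑ S ∈ goodset W₁, ν S := by
        intro W₁
        exact Finset.sum_fiberwise_of_maps_to (fun S _ => mem_univ (frag ν W₁ S)) ν
      have hb1 : ∀ W₁, (∑ T : Fin N → Bool, ν' W₁ T) ≤ 1 := by
        intro W₁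
        rw [hb W₁]
        refine le_trans ?_ hν1
        exact Finset.sum_le_sum_of_subset_of_nonneg (Finset.subset_univ _)
          (fun T _ _ => hν0 T)
      -- (c) spread
      have hc : ∀ W₁, IsSpread N p (ν' W₁) := by
        intro W₁ R
        have h1 : ∑ T ∈ univ.filter (fun T => R ≤ T), ν' W₁ T
            = ∑ S ∈ (goodset W₁).filter (fun S => R ≤ frag ν W₁ S), ν S := by
          rw [hν']
          exact fiber_filter_sum (goodset W₁) (frag ν W₁) (fun T => R ≤ T) ν
        rw [h1]
        refine le_trans ?_ (hsp R)
        apply Finset.sum_le_sum_of_subset_of_nonneg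
        · intro S hS
          rw [mem_filter] at hS ⊢
          obtain ⟨hSg, hRf⟩ := hS
          rw [hgood_mem] at hSg
          exact ⟨mem_univ S, le_trans hRf (frag_le hSg.1)⟩
        · intro T _ _
          exact hν0 T
      -- (e) support
      have he : ∀ W₁ T, ν' W₁ T ≠ 0 → wt T ≤ j := by
        intro W₁ T hT
        obtain ⟨S, hSmem, -⟩ := Finset.exists_ne_zero_of_sum_ne_zero hT
        rw [mem_filter] at hSmem
        obtain ⟨hSg, hfrag⟩ := hSmem
        rw [hgood_mem] at hSg
        rw [← hfrag]
        exact hSg.2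
      -- (f) succ lifting
      have hf : ∀ W₁ W₂, succInd (ν' W₁) W₂ ≤ succInd ν (W₁ ⊔ W₂) := by
        intro W₁ W₂
        rw [succInd, succInd]
        by_cases h : ∃ T, ν' W₁ T ≠ 0 ∧ T ≤ W₂
        · rw [if_pos h]
          obtain ⟨T, hT, hTW⟩ := h
          obtain ⟨S, hSmem, -⟩ := Finset.exists_ne_zero_of_sum_ne_zero hT
          rw [mem_filter] at hSmem
          obtain ⟨hSg, hfrag⟩ := hSmem
          rw [hgood_mem] at hSg
          obtain ⟨S', hS'ne, hS'⟩ := frag_exists (W := W₁) hSg.1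
          rw [hfrag] at hS'
          have : S' ≤ W₁ ⊔ W₂ := le_trans (le_sup_of_frag hS') (sup_le_sup_left hTW W₁)
          rw [if_pos ⟨S', hS'ne, this⟩]
        · rw [if_neg h]
          split <;> norm_num
      -- badmass equality
      set badmass : (Fin N → Bool) → ℝ :=
        fun W₁ => ∑ S ∈ univ.filter (fun S => ν S ≠ 0 ∧ j + 1 ≤ wt (frag ν W₁ S)), ν S
        with hbadmass
      have hgb : ∀ W₁, (∑ T : Fin N → Bool, ν' W₁ T) = (∑ T : Fin N → Bool, ν T) - badmass W₁ := by
        intro W₁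
        have e1 : goodset W₁ = (univ.filter (fun S => ν S ≠ 0)).filter
            (fun S => wt (frag ν W₁ S) ≤ j) := by
          rw [hgoodset, Finset.filter_filter]
        have e2 : univ.filter (fun S => ν S ≠ 0 ∧ j + 1 ≤ wt (frag ν W₁ S))
            = (univ.filter (fun S => ν S ≠ 0)).filter
              (fun S => ¬ (wt (frag ν W₁ S) ≤ j)) := by
          rw [Finset.filter_filter]
          apply Finset.filter_congr
          intro S _
          constructor
          · rintro ⟨h1, h2⟩; exact ⟨h1, by omega⟩
          · rintro ⟨h1, h2⟩; exact ⟨h1, by omega⟩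
        have e3 := Finset.sum_filter_add_sum_filter_not
          (univ.filter (fun S => ν S ≠ 0)) (fun S => wt (frag ν W₁ S) ≤ j) ν
        have e4 : ∑ S ∈ univ.filter (fun S => ν S ≠ 0), ν S = ∑ T : Fin N → Bool, ν T :=
          Finset.sum_filter_ne_zero univ
        have hbW : badmass W₁ = ∑ S ∈ (univ.filter (fun S => ν S ≠ 0)).filter
            (fun S => ¬ (wt (frag ν W₁ S) ≤ j)), ν S := by
          simp only [hbadmass]
          rw [e2]
        rw [hb W₁, e1, hbW]
        linarith [e3, e4]
      -- apply lemA
      have hlemA : ∑ W₁ : Fin N → Bool, wgt N γ W₁ * badmass W₁ ≤ (1/256 : ℝ)^(j+1) := by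
        have h1 := lemA (ν := ν) (γ := γ) (C := 1024) (b := b+1) (k := j)
          hν0 hsp hsupp hγ0 hγ1 (by norm_num) hpx (le_of_lt hp0)
        simp only [hbadmass]
        refine le_trans h1 ?_
        apply pow_bound
        omega
      -- main chain
      have hQrw : QQ γ (b+1) = γ + QQ γ j - γ * QQ γ j := by
        rw [QQ_succ]; ring
      have hsplit : ∑ W : Fin N → Bool, wgt N (QQ γ (b+1)) W * succInd ν W
          = ∑ W₁ : Fin N → Bool, ∑ W₂ : Fin N → Bool,
              wgt N γ W₁ * wgt N (QQ γ j) W₂ * succInd ν (W₁ ⊔ W₂) := by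
        rw [hQrw]
        exact split γ (QQ γ j) (succInd ν)
      have hperW : ∀ W₁ : Fin N → Bool,
          wgt N γ W₁ * ((∑ T : Fin N → Bool, ν T) - badmass W₁ - eps j)
          ≤ ∑ W₂ : Fin N → Bool, wgt N γ W₁ * wgt N (QQ γ j) W₂ * succInd ν (W₁ ⊔ W₂) := by
        intro W₁
        have hwnn : 0 ≤ wgt N γ W₁ := wgt_nonneg (le_of_lt hγ0) hγ1 W₁
        have hIH : (∑ T : Fin N → Bool, ν' W₁ T) - eps j ≤
            ∑ W₂ : Fin N → Bool, wgt N (QQ γ j) W₂ * succInd (ν' W₁) W₂ :=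
          IH j hjlt (ν' W₁) (ha W₁) (hb1 W₁) (hc W₁) (he W₁)
        have hmono : ∑ W₂ : Fin N → Bool, wgt N (QQ γ j) W₂ * succInd (ν' W₁) W₂
            ≤ ∑ W₂ : Fin N → Bool, wgt N (QQ γ j) W₂ * succInd ν (W₁ ⊔ W₂) := by
          refine Finset.sum_le_sum (fun W₂ _ => ?_)
          exact mul_le_mul_of_nonneg_left (hf W₁ W₂)
            (wgt_nonneg hQj.1 hQj.2 W₂)
        calc wgt N γ W₁ * ((∑ T : Fin N → Bool, ν T) - badmass W₁ - eps j)
            = wgt N γ W₁ * ((∑ T : Fin N → Bool, ν' W₁ T) - eps j) := by rw [hgb W₁]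
          _ ≤ wgt N γ W₁ * (∑ W₂ : Fin N → Bool, wgt N (QQ γ j) W₂ * succInd ν (W₁ ⊔ W₂)) := by
              apply mul_le_mul_of_nonneg_left _ hwnn
              exact le_trans hIH hmono
          _ = ∑ W₂ : Fin N → Bool, wgt N γ W₁ * wgt N (QQ γ j) W₂ * succInd ν (W₁ ⊔ W₂) := by
              rw [Finset.mul_sum]
              refine Finset.sum_congr rfl (fun W₂ _ => ?_)
              ring
      have hsum1 : ∑ W₁ : Fin N → Bool,
          wgt N γ W₁ * ((∑ T : Fin N → Bool, ν T) - badmass W₁ - eps j)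
          = ((∑ T : Fin N → Bool, ν T) - eps j)
            - ∑ W₁ : Fin N → Bool, wgt N γ W₁ * badmass W₁ := by
        have : ∀ W₁ : Fin N → Bool,
            wgt N γ W₁ * ((∑ T : Fin N → Bool, ν T) - badmass W₁ - eps j)
            = wgt N γ W₁ * ((∑ T : Fin N → Bool, ν T) - eps j) - wgt N γ W₁ * badmass W₁ := by
          intro W₁; ring
        rw [Finset.sum_congr rfl (fun W₁ _ => this W₁), Finset.sum_sub_distrib,
          ← Finset.sum_mul, sum_wgt, one_mul]
      rw [eps_succ]
      calc (∑ T : Fin N → Bool, ν T) - ((1/256 : ℝ)^(j+1) + eps j)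
          ≤ ((∑ T : Fin N → Bool, ν T) - eps j)
            - ∑ W₁ : Fin N → Bool, wgt N γ W₁ * badmass W₁ := by linarith [hlemA]
        _ = ∑ W₁ : Fin N → Bool,
            wgt N γ W₁ * ((∑ T : Fin N → Bool, ν T) - badmass W₁ - eps j) := hsum1.symm
        _ ≤ ∑ W₁ : Fin N → Bool, ∑ W₂ : Fin N → Bool,
            wgt N γ W₁ * wgt N (QQ γ j) W₂ * succInd ν (W₁ ⊔ W₂) :=
            Finset.sum_le_sum (fun W₁ _ => hperW W₁)
        _ = ∑ W : Fin N → Bool, wgt N (QQ γ (b+1)) W * succInd ν W := hsplit.symm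

open Classical in
lemma mu_one {F : Set (Fin N → Bool)} (hne : F.Nonempty) (hmono : MonotoneProp F) :
    mu N 1 F = 1 := by
  have htop : (⊤ : Fin N → Bool) ∈ F := by
    obtain ⟨T0, hT0⟩ := hne
    exact hmono T0 ⊤ hT0 le_top
  rw [mu_eq]
  rw [Finset.sum_eq_single (⊤ : Fin N → Bool)]
  · rw [wgt, wt_top, ind, if_pos htop]
    simp
  · intro x _ hx
    have hlt : wt x < N := by
      rcases lt_or_eq_of_le (wt_le x) with h | h
      · exact h
      · exact absurd (eq_top_of_wt x h) hx
    rw [wgt]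
    have hz : (1 - (1:ℝ)) ^ (N - wt x) = 0 := by
      rw [sub_self]
      exact zero_pow (by omega)
    rw [hz, mul_zero, zero_mul]
  · intro h
    exact absurd (mem_univ _) h

open Classical in
lemma mu_strict {F : Set (Fin N → Bool)} (hF : MonotoneProp F) {a c : ℝ}
    (h0 : 0 < a) (hac : a < c) (hc1 : c < 1) {s : Fin N → Bool}
    (hsF : s ∈ F) (hmin : ∀ y ∈ F, y ≤ s → y = s) (hwt : 1 ≤ wt s) :
    mu N a F < mu N c F := by
  have ha1 : a < 1 := lt_trans hac hc1
  set b := (c - a)/(1 - a) with hb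
  have hb0 : 0 < b := div_pos (by linarith) (by linarith)
  have hb1 : b < 1 := by rw [hb, div_lt_one (by linarith)]; linarith
  have h1a : (1:ℝ) - a ≠ 0 := by linarith
  have hkey : (c - a) / (1 - a) * (1 - a) = c - a := div_mul_cancel₀ _ h1a
  have hceq : a + b - a * b = c := by rw [hb]; linear_combination hkey
  -- choose the coordinate i
  have hne : (univ.filter (fun i => s i = true)).Nonempty := by
    rw [← Finset.card_pos]
    have : wt s = (univ.filter (fun i => s i = true)).card := rfl
    omega
  obtain ⟨i, hi⟩ := hne
  rw [mem_filter] at hi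
  set x₀ : Fin N → Bool := fun j => if j = i then false else s j with hx₀
  set y₀ : Fin N → Bool := fun j => decide (j = i) with hy₀
  have hsup : x₀ ⊔ y₀ = s := by
    funext j
    rw [sup_apply_or]
    by_cases hj : j = i
    · subst hj
      simp only [hx₀, hy₀, if_pos rfl, decide_eq_true_eq]
      simp [hi.2]
    · simp only [hx₀, hy₀, if_neg hj]
      simp [hj]
  have hx₀le : x₀ ≤ s := by
    intro j
    by_cases hj : j = i
    · simp [hx₀, hj]
    · simp [hx₀, hj]
  have hx₀ne : x₀ ≠ s := by
    intro h
    have := congrFun h i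
    simp [hx₀, hi.2] at this
  have hx₀F : x₀ ∉ F := fun h => hx₀ne (hmin x₀ h hx₀le)
  have hxy : ∀ x : Fin N → Bool, wgt N a x * ind F x
      = ∑ y : Fin N → Bool, wgt N a x * wgt N b y * ind F x := by
    intro x
    have h1 : ∑ y : Fin N → Bool, wgt N a x * wgt N b y * ind F x
        = (wgt N a x * ind F x) * ∑ y : Fin N → Bool, wgt N b y := by
      rw [Finset.mul_sum]
      exact Finset.sum_congr rfl (fun y _ => by ring)
    rw [h1, sum_wgt, mul_one]
  have hmuc : mu N c F = ∑ q : (Fin N → Bool) × (Fin N → Bool),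
      wgt N a q.1 * wgt N b q.2 * ind F (q.1 ⊔ q.2) := by
    rw [mu_eq, ← hceq, split]
    rw [← Finset.univ_product_univ, Finset.sum_product]
  have hmua : mu N a F = ∑ q : (Fin N → Bool) × (Fin N → Bool),
      wgt N a q.1 * wgt N b q.2 * ind F q.1 := by
    rw [mu_eq]
    calc ∑ x : Fin N → Bool, wgt N a x * ind F x
        = ∑ x : Fin N → Bool, ∑ y : Fin N → Bool, wgt N a x * wgt N b y * ind F x :=
          Finset.sum_congr rfl (fun x _ => hxy x)
      _ = ∑ q : (Fin N → Bool) × (Fin N → Bool),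
          wgt N a q.1 * wgt N b q.2 * ind F q.1 := by
          rw [← Finset.univ_product_univ, Finset.sum_product]
  rw [hmua, hmuc]
  apply Finset.sum_lt_sum
  · intro q _
    apply mul_le_mul_of_nonneg_left (ind_mono hF le_sup_left)
    exact mul_nonneg (wgt_nonneg (le_of_lt h0) (le_of_lt ha1) _)
      (wgt_nonneg (le_of_lt hb0) (le_of_lt hb1) _)
  · refine ⟨(x₀, y₀), mem_univ _, ?_⟩
    simp only
    rw [hsup]
    have hindx : ind F x₀ = 0 := by rw [ind, if_neg hx₀F]
    have hinds : ind F s = 1 := by rw [ind, if_pos hsF]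
    rw [hindx, hinds, mul_zero, mul_one]
    apply mul_pos
    · exact mul_pos (pow_pos h0 _) (pow_pos (by linarith) _)
    · exact mul_pos (pow_pos hb0 _) (pow_pos (by linarith) _)

end FKNSAux

/-- Frankston–Kahn–Narayanan–Park (spread-measure form): there is an absolute constant `K`
such that if a nontrivial monotone property `F` with `L(F) ≥ 2` supports a `p`-spread
probability measure, then `μ_q(F) ≥ 1/2` for `q = min(1, K·p·log L(F))`; in particular the
critical probability (the unique `p` with `μ_p(F) = 1/2`) satisfies
`p_c(F) ≤ K·p·log L(F)`. -/
theorem fkns_spread :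
    ∃ K : ℝ, 0 < K ∧
      ∀ (N : ℕ) (F : Set (Fin N → Bool)), F.Nonempty → F ≠ Set.univ →
        MonotoneProp F → 2 ≤ Lmax N F →
        ∀ p : ℝ, 0 < p → p < 1 →
        ∀ ν : (Fin N → Bool) → ℝ, (∀ T, 0 ≤ ν T) → (∑ T : Fin N → Bool, ν T) = 1 →
          (∀ T, ν T ≠ 0 → T ∈ F) → IsSpread N p ν →
          1/2 ≤ mu N (min 1 (K * p * Real.log (Lmax N F))) F ∧
          ∀ pc : ℝ, pc ∈ Set.Icc (0:ℝ) 1 → mu N pc F = 1/2 →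
            pc ≤ K * p * Real.log (Lmax N F) := by
  classical
  refine ⟨3072, by norm_num, ?_⟩
  intro N F hFne hFneq hmono hL2 p hp0 hp1 ν hν0 hν1 hνF hνsp
  set γ : ℝ := min 1 (1024 * p) with hγdef
  have hγ0 : 0 < γ := lt_min one_pos (by linarith)
  have hγ1 : γ ≤ 1 := min_le_left _ _
  -- the pushforward onto minimal elements
  set ν₀ : (Fin N → Bool) → ℝ := fun T =>
    ∑ S ∈ (univ.filter (fun S => ν S ≠ 0)).filter (fun S => mini F S = T), ν S with hν₀
  have h₀nonneg : ∀ T, 0 ≤ ν₀ T := fun T => Finset.sum_nonneg (fun S _ => hν0 S)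
  have h₀sum : (∑ T : Fin N → Bool, ν₀ T) = 1 := by
    calc ∑ T : Fin N → Bool, ν₀ T
        = ∑ S ∈ univ.filter (fun S => ν S ≠ 0), ν S :=
          Finset.sum_fiberwise_of_maps_to (fun S _ => mem_univ _) ν
      _ = ∑ S : Fin N → Bool, ν S := Finset.sum_filter_ne_zero univ
      _ = 1 := hν1
  have h₀spread : IsSpread N p ν₀ := by
    intro R
    have h1 : ∑ T ∈ univ.filter (fun T => R ≤ T), ν₀ T
        = ∑ S ∈ (univ.filter (fun S => ν S ≠ 0)).filter (fun S => R ≤ mini F S), ν S :=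
      fiber_filter_sum _ (fun S => mini F S) (fun T => R ≤ T) ν
    rw [h1]
    refine le_trans ?_ (hνsp R)
    apply Finset.sum_le_sum_of_subset_of_nonneg
    · intro S hS
      rw [mem_filter, mem_filter] at hS
      obtain ⟨⟨-, hSne⟩, hRm⟩ := hS
      rw [mem_filter]
      exact ⟨mem_univ _, le_trans hRm (mini_spec (hνF S hSne)).2.1⟩
    · intro T _ _
      exact hν0 T
  have h₀props : ∀ T, ν₀ T ≠ 0 →
      T ∈ F ∧ (∀ y ∈ F, y ≤ T → y = T) := by
    intro T hT
    obtain ⟨S, hSmem, -⟩ := Finset.exists_ne_zero_of_sum_ne_zero hT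
    rw [mem_filter, mem_filter] at hSmem
    obtain ⟨⟨-, hSne⟩, hminieq⟩ := hSmem
    have hspec := mini_spec (hνF S hSne)
    rw [← hminieq]
    exact ⟨hspec.1, hspec.2.2⟩
  have h₀supp : ∀ T, ν₀ T ≠ 0 → wt T ≤ Lmax N F := by
    intro T hT
    obtain ⟨hTF, hTmin⟩ := h₀props T hT
    apply Finset.le_sup (f := wt)
    rw [mem_filter]
    exact ⟨mem_univ _, hTF, hTmin⟩
  -- apply the main iteration
  have hmain := main_ind hp0 hp1 (Lmax N F) ν₀ h₀nonneg (le_of_eq h₀sum) h₀spread h₀supp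
  rw [h₀sum] at hmain
  have hQmem := QQ_mem (le_of_lt hγ0) hγ1 (Lmax N F)
  have hsucc_le : ∀ W, succInd ν₀ W ≤ ind F W := by
    intro W
    rw [succInd, ind]
    by_cases h : ∃ T, ν₀ T ≠ 0 ∧ T ≤ W
    · rw [if_pos h]
      obtain ⟨T, hT, hTW⟩ := h
      rw [if_pos (hmono T W (h₀props T hT).1 hTW)]
    · rw [if_neg h]
      split <;> norm_num
  have h1 : ∑ W : Fin N → Bool, wgt N (QQ γ (Lmax N F)) W * succInd ν₀ W
      ≤ mu N (QQ γ (Lmax N F)) F := by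
    rw [mu_eq]
    refine Finset.sum_le_sum (fun W _ => ?_)
    exact mul_le_mul_of_nonneg_left (hsucc_le W) (wgt_nonneg hQmem.1 hQmem.2 W)
  have hepsL : eps (Lmax N F) ≤ 1/128 := by
    have := eps_le (Lmax N F)
    have hpos : (0:ℝ) ≤ (1/256 : ℝ)^((Lmax N F)/2+1) := by positivity
    linarith
  have hmuhalf : 1/2 ≤ mu N (QQ γ (Lmax N F)) F := by linarith
  -- comparing QQ with the target parameter
  have hL2R : (2:ℝ) ≤ (Lmax N F : ℝ) := by exact_mod_cast hL2
  have hlogL2 : Real.log 2 ≤ Real.log (Lmax N F) :=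
    Real.log_le_log (by norm_num) hL2R
  have hlog2 : (0.6931471803 : ℝ) < Real.log 2 := Real.log_two_gt_d9
  have hlogLpos : 0 < Real.log (Lmax N F) := Real.log_pos (by linarith)
  have hk : (Nat.log 2 (Lmax N F) : ℝ) * Real.log 2 ≤ Real.log (Lmax N F) := by
    have ha : (2:ℕ)^(Nat.log 2 (Lmax N F)) ≤ Lmax N F := Nat.pow_log_le_self 2 (by omega)
    have hb : ((2:ℝ))^(Nat.log 2 (Lmax N F)) ≤ ((Lmax N F : ℕ) : ℝ) := by exact_mod_cast ha
    calc (Nat.log 2 (Lmax N F) : ℝ) * Real.log 2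
        = Real.log (2^(Nat.log 2 (Lmax N F))) := (Real.log_pow (n := Nat.log 2 (Lmax N F)) (x := 2)).symm
      _ ≤ Real.log (Lmax N F) := Real.log_le_log (by positivity) hb
  have hkn : (0:ℝ) ≤ (Nat.log 2 (Lmax N F) : ℝ) := Nat.cast_nonneg _
  have hfac : (Nat.log 2 (Lmax N F) : ℝ) + 1 ≤ 3 * Real.log (Lmax N F) := by
    nlinarith [hk, hlogL2, hlog2, hkn, hlogLpos]
  have hQle : QQ γ (Lmax N F) ≤ 3072 * p * Real.log (Lmax N F) := by
    calc QQ γ (Lmax N F) ≤ γ * (Nat.log 2 (Lmax N F) + 1) :=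
          QQ_le_log (le_of_lt hγ0) hγ1 (Lmax N F) (by omega)
      _ ≤ (1024*p) * ((Nat.log 2 (Lmax N F) : ℝ) + 1) := by
          apply mul_le_mul_of_nonneg_right (min_le_right _ _)
          linarith
      _ ≤ (1024*p) * (3 * Real.log (Lmax N F)) := by
          apply mul_le_mul_of_nonneg_left hfac
          linarith
      _ = 3072 * p * Real.log (Lmax N F) := by ring
  have hQle' : QQ γ (Lmax N F) ≤ min 1 (3072 * p * Real.log (Lmax N F)) :=
    le_min hQmem.2 hQle
  have hq1 : min 1 (3072 * p * Real.log (Lmax N F)) ≤ 1 := min_le_left _ _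
  have hmufinal : 1/2 ≤ mu N (min 1 (3072 * p * Real.log (Lmax N F))) F :=
    le_trans hmuhalf (mu_mono hmono hQmem.1 hQle' hq1)
  refine ⟨hmufinal, ?_⟩
  intro pc hpc hmupc
  by_contra hgt
  push_neg at hgt
  have hM0 : 0 < 3072 * p * Real.log (Lmax N F) := by positivity
  have hpc1 : pc ≤ 1 := hpc.2
  have hMlt1 : 3072 * p * Real.log (Lmax N F) < 1 := lt_of_lt_of_le hgt hpc1
  have hqM : min 1 (3072 * p * Real.log (Lmax N F)) = 3072 * p * Real.log (Lmax N F) :=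
    min_eq_right (le_of_lt hMlt1)
  have hmuM : 1/2 ≤ mu N (3072 * p * Real.log (Lmax N F)) F := by
    rw [← hqM]; exact hmufinal
  have hpclt1 : pc < 1 := by
    rcases lt_or_eq_of_le hpc1 with h | h
    · exact h
    · exfalso
      rw [h, mu_one hFne hmono] at hmupc
      norm_num at hmupc
  obtain ⟨T0, hT0⟩ := hFne
  have hs := mini_spec hT0
  have hbotF : ⊥ ∉ F := by
    intro hbot
    apply hFneq
    apply Set.eq_univ_iff_forall.2
    intro x
    exact hmono ⊥ x hbot bot_le
  have hwts : 1 ≤ wt (mini F T0) := by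
    by_contra h
    push_neg at h
    have h0 : wt (mini F T0) = 0 := by omega
    have hbb := wt_eq_zero h0
    rw [hbb] at hs
    exact hbotF hs.1
  have hstrict : mu N (3072 * p * Real.log (Lmax N F)) F < mu N pc F :=
    mu_strict hmono hM0 hgt hpclt1 hs.1 hs.2.2 hwts
  rw [hmupc] at hstrict
  linarith
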